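/- With notation as in the splitting construction: replacing posterior x (weight σ(x)) by posteriors y and z with weights F_j(x)σ(x) and (1-F_j(x))σ(x) preserves Bayes-plausibility (i.e., F_j(x)·y + (1-F_j(x))·z = x) and strictly increases the sender's expected utility: F_j(x)·U_S(p*(y);y) + (1-F_j(x))·U_S(p*(z);z) > U_S(p*(x);x). -/

import Mathlib

open Finset

/-- Revenue from targeting index `l` against `w`. -/
noncomputable def R (n : ℕ) (θ : Fin n → ℝ) (μ : ℝ) (w : Fin n → ℝ) (l : Fin n) : ℝ :=
  (μ + (1 - μ) * (μ / (1 - μ) * θ l)) * ∑ k ∈ Finset.univ.filter (fun k => l ≤ k), w k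

/-- `l` is the optimal targeting index for `w` (lowest tie-breaking). -/
noncomputable def OptIdx (n : ℕ) (θ : Fin n → ℝ) (μ : ℝ) (w : Fin n → ℝ) (l : Fin n) : Prop :=
  (∀ k, R n θ μ w k ≤ R n θ μ w l) ∧ (∀ k, R n θ μ w k = R n θ μ w l → l ≤ k)

/-- The sender's one-shot utility from lying probability `p` against distribution `w`. -/
noncomputable def USone (n : ℕ) (θ : Fin n → ℝ) (μ : ℝ) (p : ℝ) (w : Fin n → ℝ) : ℝ :=
  ∑ k, w k * (if p ≤ μ / (1 - μ) * θ k then (1 : ℝ) else 0) * (μ + (1 - μ) * p)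

lemma USone_eq_R (n : ℕ) (θ : Fin n → ℝ) (μ : ℝ) (hμ0 : 0 < μ) (hμ1 : μ < 1)
    (hθmono : StrictMono θ) (w : Fin n → ℝ) (l : Fin n) :
    USone n θ μ (μ / (1 - μ) * θ l) w = R n θ μ w l := by
  unfold USone R
  rw [Finset.sum_filter, Finset.mul_sum]
  apply Finset.sum_congr rfl
  intro k _
  have hc : 0 < μ / (1 - μ) := div_pos hμ0 (by linarith)
  by_cases h : l ≤ k
  · have hle : μ / (1 - μ) * θ l ≤ μ / (1 - μ) * θ k :=
      mul_le_mul_of_nonneg_left (hθmono.monotone h) hc.le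
    simp [h, hle]; ring
  · have hnle : ¬ (μ / (1 - μ) * θ l ≤ μ / (1 - μ) * θ k) := by
      have hk : θ k < θ l := hθmono (lt_of_not_ge h)
      exact not_le.mpr (mul_lt_mul_of_pos_left hk hc)
    simp [h, hnle]

/-- In the splitting construction, replacing posterior `x` by `y` and `z`
with weights `F_j(x)` and `1-F_j(x)` preserves Bayes-plausibility, and strictly increases
the sender's expected utility:
`F·U_S(p*(y);y) + (1-F)·U_S(p*(z);z) > U_S(p*(x);x)`. -/
theorem stmt14 (n : ℕ) (θ : Fin n → ℝ) (μ : ℝ) (x y z : Fin n → ℝ)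
    (j jmin : Fin n) (F : ℝ)
    (hθpos : ∀ l, 0 < θ l) (hθmono : StrictMono θ) (hμ0 : 0 < μ) (hμ1 : μ < 1)
    (hx : ∀ k, 0 ≤ x k) (hx1 : ∑ k, x k = 1)
    (hjmin : 0 < x jmin) (hjminle : ∀ k, 0 < x k → jmin ≤ k) (hlt : jmin < j)
    (hF : F = ∑ k ∈ Finset.univ.filter (fun k => j ≤ k), x k)
    (hF0 : 0 < F) (hF1 : F < 1)
    (hy : ∀ k, y k = if j ≤ k then x k / F else 0)
    (hz : ∀ k, z k = if k < j then x k / (1 - F) else 0)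
    (hopt : OptIdx n θ μ x j) :
    (∀ k, F * y k + (1 - F) * z k = x k) ∧
      ∀ l, OptIdx n θ μ z l →
        USone n θ μ (μ / (1 - μ) * θ j) x <
          F * USone n θ μ (μ / (1 - μ) * θ j) y
            + (1 - F) * USone n θ μ (μ / (1 - μ) * θ l) z := by
  have hF1' : (1 : ℝ) - F ≠ 0 := by linarith
  constructor
  · intro k
    rw [hy, hz]
    by_cases h : j ≤ k
    · have h' : ¬ k < j := not_lt.mpr h
      rw [if_pos h, if_neg h']
      field_simp
      simp
    · have h' : k < j := lt_of_not_ge h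
      rw [if_neg h, if_pos h']
      field_simp
      simp
  · intro l hl
    rw [USone_eq_R n θ μ hμ0 hμ1 hθmono x j, USone_eq_R n θ μ hμ0 hμ1 hθmono y j,
        USone_eq_R n θ μ hμ0 hμ1 hθmono z l]
    -- sum of y over j ≤ k is 1
    have hsy : ∑ k ∈ Finset.univ.filter (fun k => j ≤ k), y k = 1 := by
      have h1 : ∑ k ∈ Finset.univ.filter (fun k => j ≤ k), y k
          = ∑ k ∈ Finset.univ.filter (fun k => j ≤ k), x k / F := by
        refine Finset.sum_congr rfl fun k hk => ?_
        rw [hy, if_pos (Finset.mem_filter.mp hk).2]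
      rw [h1, ← Finset.sum_div, ← hF, div_self hF0.ne']
    have hRxy : R n θ μ x j = F * R n θ μ y j := by
      unfold R
      rw [hsy, ← hF]; ring
    -- R z l > 0
    have hfactpos : ∀ m : Fin n, 0 < μ + (1 - μ) * (μ / (1 - μ) * θ m) := by
      intro m
      have h1μ : (1 : ℝ) - μ ≠ 0 := by linarith
      have : (1 - μ) * (μ / (1 - μ) * θ m) = μ * θ m := by field_simp
      rw [this]
      have := hθpos m
      positivity
    have hznonneg : ∀ k, 0 ≤ z k := by
      intro k
      rw [hz]
      split
      · exact div_nonneg (hx k) (by linarith)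
      · exact le_refl 0
    have hzjmin : 0 < z jmin := by
      rw [hz, if_pos hlt]
      exact div_pos hjmin (by linarith)
    have hsum : 0 < ∑ k ∈ Finset.univ.filter (fun k => jmin ≤ k), z k := by
      have hmem : jmin ∈ Finset.univ.filter (fun k => jmin ≤ k) := by
        simp
      calc 0 < z jmin := hzjmin
        _ ≤ _ := Finset.single_le_sum (fun k _ => hznonneg k) hmem
    have hRzjmin : 0 < R n θ μ z jmin := mul_pos (hfactpos jmin) hsum
    have hRzl : 0 < R n θ μ z l := lt_of_lt_of_le hRzjmin (hl.1 jmin)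
    have : 0 < (1 - F) * R n θ μ z l := mul_pos (by linarith) hRzl
    linarith [hRxy]
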